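/- For every natural number n, the following identity of real numbers holds: ∑_{k=0}^{2n} (−1)^k · (C(2n,k) · C(2n+k+1,k) / C(4n+2k+2,2k)) · (3−2√2)^k = ((3/4)_n · (5/4)_n) / ((7/8)_n · (9/8)_n), where C(m,j) denotes the binomial coefficient. -/

import Mathlib

/-- Rising factorial (Pochhammer symbol) `(z)_n` over the reals. -/
noncomputable def poch (z : ℝ) (n : ℕ) : ℝ := (ascPochhammer ℝ n).eval z

namespace Strange

/-- certificate numerator polynomial (128·P) -/
noncomputable def Pc (N K s : ℝ) : ℝ :=
  K * ((-45 - 60*s) + (-126 - 188*s)*N + (-112 - 192*s)*N^2 + (-32 - 64*s)*N^3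
    + ((-150 - 90*s) + (-560 - 312*s)*N + (-672 - 352*s)*N^2 + (-256 - 128*s)*N^3) * K
    + ((60 + 60*s) + (128 + 128*s)*N + (64 + 64*s)*N^2) * K^2)

noncomputable def T (n k : ℕ) : ℝ :=
  (-1 : ℝ) ^ k *
      ((((2 * n).choose k : ℝ) * ((2 * n + k + 1).choose k : ℝ)) /
        ((4 * n + 2 * k + 2).choose (2 * k) : ℝ)) *
      (3 - 2 * Real.sqrt 2) ^ k

noncomputable def G (n k : ℕ) : ℝ :=
  Pc n k (Real.sqrt 2) * (-1 : ℝ) ^ k * ((2 * n + 2).choose k : ℝ) *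
      ((2 * n + k + 1).choose k : ℝ) * (3 - 2 * Real.sqrt 2) ^ k /
    (64 * ((4 * n + 2 * k + 2).choose (2 * k) : ℝ) * (2 * (n:ℝ) + 1) * (2 * (n:ℝ) + 2) *
      (2 * (k:ℝ) + 4 * (n:ℝ) + 3))

set_option maxRecDepth 100000 in
set_option maxHeartbeats 2000000 in
lemma key (N K C1 C2 C3 s x : ℝ) (hs : s * s = 2) (hx : x = 3 - 2 * s)
    (hC3 : C3 ≠ 0) (hK1 : (K + 1) ≠ 0) (hK2 : (2*K+1) ≠ 0) (hK3 : (2*K+2) ≠ 0)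
    (hN1 : (2*N+1) ≠ 0) (hN2 : (2*N+2) ≠ 0) (hN3 : (2*N+3) ≠ 0)
    (hD1 : (2*K+4*N+3) ≠ 0) (hD2 : (2*(K+1)+4*N+3) ≠ 0)
    (h41 : (4*N+3) ≠ 0) (h42 : (4*N+4) ≠ 0) (h43 : (4*N+5) ≠ 0) (h44 : (4*N+6) ≠ 0)
    (g1 : (4*N+2*K+3) ≠ 0) (g2 : (4*N+2*K+4) ≠ 0) (g3 : (4*N+2*K+5) ≠ 0) (g4 : (4*N+2*K+6) ≠ 0) :
    Pc N (K+1) s * (-1) * (C1 * (2*N+2-K) / (K+1)) * (C2 * (2*N+K+2) / (K+1)) * x /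
        (64 * (C3 * ((4*N+2*K+3)*(4*N+2*K+4)) / ((2*K+1)*(2*K+2))) * (2*N+1) * (2*N+2) *
          (2*(K+1)+4*N+3))
      - Pc N K s * C1 * C2 / (64 * C3 * (2*N+1) * (2*N+2) * (2*K+4*N+3))
      = (8*N+7)*(8*N+9)/64 *
          (C1 * (C2 * ((2*N+K+2)*(2*N+K+3)) / ((2*N+2)*(2*N+3))) /
            (C3 * ((4*N+2*K+3)*(4*N+2*K+4)*(4*N+2*K+5)*(4*N+2*K+6)) /
              ((4*N+3)*(4*N+4)*(4*N+5)*(4*N+6))))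
        - (4*N+3)*(4*N+5)/16 *
          ((C1 * ((2*N+1-K)*(2*N+2-K)) / ((2*N+1)*(2*N+2))) * C2 / C3) := by
  subst hx
  have hPx : Pc N (K+1) s * (3 - 2*s) = (K+1)*((3*((-45) + (-126)*N + (-112)*N^2 + (-32)*N^3 + ((-150) - 560*N - 672*N^2 - 256*N^3)*(K+1) + (60 + 128*N + 64*N^2)*(K+1)^2)-4*((-60) - 188*N - 192*N^2 - 64*N^3 + ((-90) - 312*N - 352*N^2 - 128*N^3)*(K+1) + (60 + 128*N + 64*N^2)*(K+1)^2)) + (3*((-60) - 188*N - 192*N^2 - 64*N^3 + ((-90) - 312*N - 352*N^2 - 128*N^3)*(K+1) + (60 + 128*N + 64*N^2)*(K+1)^2)-2*((-45) + (-126)*N + (-112)*N^2 + (-32)*N^3 + ((-150) - 560*N - 672*N^2 - 256*N^3)*(K+1) + (60 + 128*N + 64*N^2)*(K+1)^2))*s) := by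
    simp only [Pc]
    linear_combination (-2*(K+1)*((-60) - 188*N - 192*N^2 - 64*N^3 + ((-90) - 312*N - 352*N^2 - 128*N^3)*(K+1) + (60 + 128*N + 64*N^2)*(K+1)^2)) * hs
  rw [show Pc N (K+1) s * (-1) * (C1 * (2*N+2-K) / (K+1)) * (C2 * (2*N+K+2) / (K+1)) * (3 - 2*s)
      = (-1) * (C1 * (2*N+2-K) / (K+1)) * (C2 * (2*N+K+2) / (K+1)) * (Pc N (K+1) s * (3 - 2*s)) by ring,
    hPx]
  simp only [Pc]
  have a1 : N+1 ≠ 0 := fun h => hN2 (by linear_combination 2*h)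
  have a3 : 2*N+K+2 ≠ 0 := fun h => g2 (by linear_combination 2*h)
  have a4 : 2*N+K+3 ≠ 0 := fun h => g4 (by linear_combination 2*h)
  have a5 : 2*K+4*N+5 ≠ 0 := fun h => hD2 (by linear_combination h)
  have a6 : 2*N+3 ≠ 0 := hN3
  have b1 : N*4+2*K+3 ≠ 0 := fun h => g1 (by linear_combination h)
  have b2 : N*4+2*K+4 ≠ 0 := fun h => g2 (by linear_combination h)
  have b3 : N*4+2*K+5 ≠ 0 := fun h => g3 (by linear_combination h)
  have b4 : N*4+2*K+6 ≠ 0 := fun h => g4 (by linear_combination h)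
  have b5 : 2*(K+1)+N*4+3 ≠ 0 := fun h => hD2 (by linear_combination h)
  have b6 : 2*K+N*4+3 ≠ 0 := fun h => hD1 (by linear_combination h)
  field_simp
  ring

-- appended to work.lean inside namespace Strange
lemma hs2 : Real.sqrt 2 * Real.sqrt 2 = 2 := Real.mul_self_sqrt (by norm_num)

lemma step (n k : ℕ) :
    G n (k+1) - G n k
      = (8*(n:ℝ)+7)*(8*(n:ℝ)+9)/64 * T (n+1) k - (4*(n:ℝ)+3)*(4*(n:ℝ)+5)/16 * T n k := by
  have e1 : 2*(n+1) = 2*n+2 := by ring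
  have e2 : 2*(n+1)+k+1 = 2*n+k+3 := by ring
  have e3 : 4*(n+1)+2*k+2 = 4*n+2*k+6 := by ring
  have e4 : 2*n+(k+1)+1 = 2*n+k+2 := by ring
  have e5 : 4*n+2*(k+1)+2 = 4*n+2*k+4 := by ring
  have e6 : 2*(k+1) = 2*k+2 := by ring
  rcases le_or_gt k (2*n+2) with hk | hk
  · -- main case
    have hc3 : ((4*n+2*k+2).choose (2*k) : ℝ) ≠ 0 :=
      Nat.cast_ne_zero.mpr (Nat.choose_pos (by omega)).ne'
    -- ℕ identities
    have m0 : (2*n).choose k * ((2*n+1)*(2*n+2))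
        = (2*n+2).choose k * ((2*n+1-k)*(2*n+2-k)) := by
      have a1 := Nat.choose_mul_succ_eq (2*n) k
      have a2 := Nat.choose_mul_succ_eq (2*n+1) k
      calc (2*n).choose k * ((2*n+1)*(2*n+2)) = ((2*n).choose k * (2*n+1))*(2*n+2) := by ring
        _ = ((2*n+1).choose k * (2*n+1-k))*(2*n+2) := by rw [a1]
        _ = ((2*n+1).choose k * (2*n+2))*(2*n+1-k) := by ring
        _ = ((2*n+2).choose k * (2*n+2-k))*(2*n+1-k) := by rw [a2]
        _ = (2*n+2).choose k * ((2*n+1-k)*(2*n+2-k)) := by ring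
    have H0 : (((2*n).choose k : ℝ))
        = ((2*n+2).choose k : ℝ) * ((2*(n:ℝ)+1-k)*(2*(n:ℝ)+2-k)) / ((2*(n:ℝ)+1)*(2*(n:ℝ)+2)) := by
      rw [eq_div_iff (by positivity)]
      rcases le_or_gt k (2*n+1) with h | h
      · have := congrArg (Nat.cast : ℕ → ℝ) m0
        push_cast [Nat.cast_sub (show k ≤ 2*n+1 by omega),
          Nat.cast_sub (show k ≤ 2*n+2 by omega)] at this
        linear_combination this
      · have hk2 : k = 2*n+2 := by omega
        subst hk2
        rw [Nat.choose_eq_zero_of_lt (by omega : 2*n < 2*n+2)]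
        push_cast
        ring
    have m2a := Nat.choose_mul_succ_eq (2*n+k+1) k
    have m2b := Nat.choose_mul_succ_eq (2*n+k+2) k
    rw [show 2*n+k+1+1 = 2*n+k+2 by ring, show 2*n+k+2-k = 2*n+2 by omega] at m2a
    rw [show 2*n+k+2+1 = 2*n+k+3 by ring, show 2*n+k+3-k = 2*n+3 by omega] at m2b
    have H2 : (((2*n+k+3).choose k : ℝ))
        = ((2*n+k+1).choose k : ℝ) * ((2*(n:ℝ)+(k:ℝ)+2)*(2*(n:ℝ)+(k:ℝ)+3))
            / ((2*(n:ℝ)+2)*(2*(n:ℝ)+3)) := by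
      rw [eq_div_iff (by positivity)]
      have chain : (2*n+k+3).choose k * ((2*n+2)*(2*n+3))
          = (2*n+k+1).choose k * ((2*n+k+2)*(2*n+k+3)) := by
        calc (2*n+k+3).choose k * ((2*n+2)*(2*n+3))
            = ((2*n+k+3).choose k * (2*n+3))*(2*n+2) := by ring
          _ = ((2*n+k+2).choose k * (2*n+k+3))*(2*n+2) := by rw [← m2b]
          _ = ((2*n+k+2).choose k * (2*n+2))*(2*n+k+3) := by ring
          _ = ((2*n+k+1).choose k * (2*n+k+2))*(2*n+k+3) := by rw [← m2a]
          _ = (2*n+k+1).choose k * ((2*n+k+2)*(2*n+k+3)) := by ring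
      have := congrArg (Nat.cast : ℕ → ℝ) chain
      push_cast at this
      linear_combination this
    have m3a := Nat.choose_mul_succ_eq (4*n+2*k+2) (2*k)
    have m3b := Nat.choose_mul_succ_eq (4*n+2*k+3) (2*k)
    have m3c := Nat.choose_mul_succ_eq (4*n+2*k+4) (2*k)
    have m3d := Nat.choose_mul_succ_eq (4*n+2*k+5) (2*k)
    rw [show 4*n+2*k+2+1 = 4*n+2*k+3 by ring, show 4*n+2*k+3-2*k = 4*n+3 by omega] at m3a
    rw [show 4*n+2*k+3+1 = 4*n+2*k+4 by ring, show 4*n+2*k+4-2*k = 4*n+4 by omega] at m3b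
    rw [show 4*n+2*k+4+1 = 4*n+2*k+5 by ring, show 4*n+2*k+5-2*k = 4*n+5 by omega] at m3c
    rw [show 4*n+2*k+5+1 = 4*n+2*k+6 by ring, show 4*n+2*k+6-2*k = 4*n+6 by omega] at m3d
    have H3 : (((4*n+2*k+6).choose (2*k) : ℝ))
        = ((4*n+2*k+2).choose (2*k) : ℝ) *
            ((4*(n:ℝ)+2*(k:ℝ)+3)*(4*(n:ℝ)+2*(k:ℝ)+4)*(4*(n:ℝ)+2*(k:ℝ)+5)*(4*(n:ℝ)+2*(k:ℝ)+6))
            / ((4*(n:ℝ)+3)*(4*(n:ℝ)+4)*(4*(n:ℝ)+5)*(4*(n:ℝ)+6)) := by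
      rw [eq_div_iff (by positivity)]
      have chain : (4*n+2*k+6).choose (2*k) * ((4*n+3)*(4*n+4)*(4*n+5)*(4*n+6))
          = (4*n+2*k+2).choose (2*k) * ((4*n+2*k+3)*(4*n+2*k+4)*(4*n+2*k+5)*(4*n+2*k+6)) := by
        calc (4*n+2*k+6).choose (2*k) * ((4*n+3)*(4*n+4)*(4*n+5)*(4*n+6))
            = ((4*n+2*k+6).choose (2*k) * (4*n+6))*((4*n+3)*(4*n+4)*(4*n+5)) := by ring
          _ = ((4*n+2*k+5).choose (2*k) * (4*n+2*k+6))*((4*n+3)*(4*n+4)*(4*n+5)) := by rw [← m3d]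
          _ = ((4*n+2*k+5).choose (2*k) * (4*n+5))*((4*n+3)*(4*n+4)*(4*n+2*k+6)) := by ring
          _ = ((4*n+2*k+4).choose (2*k) * (4*n+2*k+5))*((4*n+3)*(4*n+4)*(4*n+2*k+6)) := by rw [← m3c]
          _ = ((4*n+2*k+4).choose (2*k) * (4*n+4))*((4*n+3)*(4*n+2*k+5)*(4*n+2*k+6)) := by ring
          _ = ((4*n+2*k+3).choose (2*k) * (4*n+2*k+4))*((4*n+3)*(4*n+2*k+5)*(4*n+2*k+6)) := by rw [← m3b]
          _ = ((4*n+2*k+3).choose (2*k) * (4*n+3))*((4*n+2*k+4)*(4*n+2*k+5)*(4*n+2*k+6)) := by ring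
          _ = ((4*n+2*k+2).choose (2*k) * (4*n+2*k+3))*((4*n+2*k+4)*(4*n+2*k+5)*(4*n+2*k+6)) := by rw [← m3a]
          _ = (4*n+2*k+2).choose (2*k) * ((4*n+2*k+3)*(4*n+2*k+4)*(4*n+2*k+5)*(4*n+2*k+6)) := by ring
      have := congrArg (Nat.cast : ℕ → ℝ) chain
      push_cast at this
      linear_combination this
    have m4 := Nat.choose_succ_right_eq (2*n+2) k
    have H4 : (((2*n+2).choose (k+1) : ℝ))
        = ((2*n+2).choose k : ℝ) * (2*(n:ℝ)+2-(k:ℝ)) / ((k:ℝ)+1) := by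
      rw [eq_div_iff (by positivity)]
      have := congrArg (Nat.cast : ℕ → ℝ) m4
      push_cast [Nat.cast_sub (show k ≤ 2*n+2 by omega)] at this
      linear_combination this
    have m5 := Nat.add_one_mul_choose_eq (2*n+k+1) k
    have H5 : (((2*n+k+2).choose (k+1) : ℝ))
        = ((2*n+k+1).choose k : ℝ) * (2*(n:ℝ)+(k:ℝ)+2) / ((k:ℝ)+1) := by
      rw [eq_div_iff (by positivity)]
      rw [show 2*n+k+1+1 = 2*n+k+2 by ring] at m5
      have := congrArg (Nat.cast : ℕ → ℝ) m5
      push_cast [Nat.succ_eq_add_one] at this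
      linear_combination -this
    have m6a := Nat.add_one_mul_choose_eq (4*n+2*k+2) (2*k)
    have m6b := Nat.add_one_mul_choose_eq (4*n+2*k+3) (2*k+1)
    have H6 : (((4*n+2*k+4).choose (2*k+2) : ℝ))
        = ((4*n+2*k+2).choose (2*k) : ℝ) * ((4*(n:ℝ)+2*(k:ℝ)+3)*(4*(n:ℝ)+2*(k:ℝ)+4))
            / ((2*(k:ℝ)+1)*(2*(k:ℝ)+2)) := by
      rw [eq_div_iff (by positivity)]
      rw [show 4*n+2*k+2+1 = 4*n+2*k+3 by ring] at m6a
      rw [show 4*n+2*k+3+1 = 4*n+2*k+4 by ring, show 2*k+1+1 = 2*k+2 by ring] at m6b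
      have chain : (4*n+2*k+4).choose (2*k+2) * ((2*k+1)*(2*k+2))
          = (4*n+2*k+2).choose (2*k) * ((4*n+2*k+3)*(4*n+2*k+4)) := by
        calc (4*n+2*k+4).choose (2*k+2) * ((2*k+1)*(2*k+2))
            = ((4*n+2*k+4).choose (2*k+2) * (2*k+2))*(2*k+1) := by ring
          _ = ((4*n+2*k+4) * (4*n+2*k+3).choose (2*k+1))*(2*k+1) := by rw [← m6b]
          _ = ((4*n+2*k+3).choose (2*k+1) * (2*k+1))*(4*n+2*k+4) := by ring
          _ = ((4*n+2*k+3) * (4*n+2*k+2).choose (2*k))*(4*n+2*k+4) := by rw [← m6a]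
          _ = (4*n+2*k+2).choose (2*k) * ((4*n+2*k+3)*(4*n+2*k+4)) := by ring
      have := congrArg (Nat.cast : ℕ → ℝ) chain
      push_cast at this
      linear_combination this
    simp only [T, G]
    rw [e2, e3, e1, e4, e5, e6]
    rw [H0, H2, H3, H4, H5, H6]
    push_cast
    simp only [pow_succ]
    linear_combination ((-1:ℝ)^k * (3 - 2*Real.sqrt 2)^k) *
      key (n:ℝ) (k:ℝ) ((2*n+2).choose k : ℝ) ((2*n+k+1).choose k : ℝ)
        ((4*n+2*k+2).choose (2*k) : ℝ) (Real.sqrt 2) (3 - 2*Real.sqrt 2) hs2 rfl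
        hc3 (by positivity) (by positivity) (by positivity) (by positivity) (by positivity)
        (by positivity) (by positivity) (by positivity) (by positivity) (by positivity)
        (by positivity) (by positivity) (by positivity) (by positivity) (by positivity)
        (by positivity)
  · -- degenerate case : everything vanishes
    have z1 : (2*n).choose k = 0 := Nat.choose_eq_zero_of_lt (by omega)
    have z2 : (2*n+2).choose k = 0 := Nat.choose_eq_zero_of_lt (by omega)
    have z3 : (2*n+2).choose (k+1) = 0 := Nat.choose_eq_zero_of_lt (by omega)
    simp [T, G, z1, z2, z3, e1]


lemma G_zero (n : ℕ) : G n 0 = 0 := by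
  simp [G, Pc]

lemma G_top (n : ℕ) : G n (2*n+3) = 0 := by
  have : (2*n+2).choose (2*n+3) = 0 := Nat.choose_eq_zero_of_lt (by omega)
  simp [G, this]

lemma T_big {n k : ℕ} (h : 2*n < k) : T n k = 0 := by
  have : (2*n).choose k = 0 := Nat.choose_eq_zero_of_lt h
  simp [T, this]

lemma sum_rec (n : ℕ) :
    (8*(n:ℝ)+7)*(8*(n:ℝ)+9)/64 * ∑ k ∈ Finset.range (2*(n+1)+1), T (n+1) k
      = (4*(n:ℝ)+3)*(4*(n:ℝ)+5)/16 * ∑ k ∈ Finset.range (2*n+1), T n k := by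
  have tele := Finset.sum_range_sub (G n) (2*n+3)
  rw [G_top, G_zero, sub_zero] at tele
  have expand : ∑ k ∈ Finset.range (2*n+3), (G n (k+1) - G n k)
      = (8*(n:ℝ)+7)*(8*(n:ℝ)+9)/64 * ∑ k ∈ Finset.range (2*n+3), T (n+1) k
        - (4*(n:ℝ)+3)*(4*(n:ℝ)+5)/16 * ∑ k ∈ Finset.range (2*n+3), T n k := by
    rw [Finset.mul_sum, Finset.mul_sum, ← Finset.sum_sub_distrib]
    exact Finset.sum_congr rfl fun k _ => step n k
  rw [tele] at expand
  have t1 : T n (2*n+1) = 0 := T_big (by omega)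
  have t2 : T n (2*n+2) = 0 := T_big (by omega)
  have e7 : 2*n+3 = (2*n+2)+1 := by ring
  have e8 : 2*(n+1)+1 = 2*n+3 := by ring
  have sT : ∑ k ∈ Finset.range (2*n+3), T n k = ∑ k ∈ Finset.range (2*n+1), T n k := by
    rw [e7, Finset.sum_range_succ, show 2*n+2 = (2*n+1)+1 by ring, Finset.sum_range_succ,
      t1, t2]
    ring
  rw [sT, ← e8] at expand
  linarith [expand]

lemma poch_succ (z : ℝ) (n : ℕ) : poch z (n+1) = poch z n * (z + n) := by
  simp [poch, ascPochhammer_succ_right]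

lemma poch_pos {z : ℝ} (hz : 0 < z) (n : ℕ) : 0 < poch z n := by
  induction n with
  | zero => simp [poch]
  | succ m ih =>
      rw [poch_succ]
      have : (0:ℝ) ≤ m := Nat.cast_nonneg m
      nlinarith

end Strange

theorem stmt_1 (n : ℕ) :
    ∑ k ∈ Finset.range (2 * n + 1),
      (-1 : ℝ) ^ k *
        ((((2 * n).choose k : ℝ) * ((2 * n + k + 1).choose k : ℝ)) /
          ((4 * n + 2 * k + 2).choose (2 * k) : ℝ)) *
        (3 - 2 * Real.sqrt 2) ^ k
      = (poch (3 / 4) n * poch (5 / 4) n) / (poch (7 / 8) n * poch (9 / 8) n) := by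
  induction n with
  | zero => norm_num [poch]
  | succ m ih =>
      have hrec := Strange.sum_rec m
      have hQ1 : (0:ℝ) < poch (7/8) m := Strange.poch_pos (by norm_num) m
      have hQ2 : (0:ℝ) < poch (9/8) m := Strange.poch_pos (by norm_num) m
      have hQ1' : (0:ℝ) < poch (7/8) (m+1) := Strange.poch_pos (by norm_num) (m+1)
      have hQ2' : (0:ℝ) < poch (9/8) (m+1) := Strange.poch_pos (by norm_num) (m+1)
      have hS : ∑ k ∈ Finset.range (2 * m + 1),
          (-1 : ℝ) ^ k *
            ((((2 * m).choose k : ℝ) * ((2 * m + k + 1).choose k : ℝ)) /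
              ((4 * m + 2 * k + 2).choose (2 * k) : ℝ)) *
            (3 - 2 * Real.sqrt 2) ^ k
          = (poch (3 / 4) m * poch (5 / 4) m) / (poch (7 / 8) m * poch (9 / 8) m) := ih
      simp only [Strange.T] at hrec
      rw [hS] at hrec
      have hp1 := Strange.poch_succ (3/4 : ℝ) m
      have hp2 := Strange.poch_succ (5/4 : ℝ) m
      have hp3 := Strange.poch_succ (7/8 : ℝ) m
      have hp4 := Strange.poch_succ (9/8 : ℝ) m
      have hA : (8*(m:ℝ)+7)*(8*(m:ℝ)+9)/64 ≠ 0 := by positivity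
      have goal2 : ∑ k ∈ Finset.range (2 * (m+1) + 1),
          (-1 : ℝ) ^ k *
            ((((2 * (m+1)).choose k : ℝ) * ((2 * (m+1) + k + 1).choose k : ℝ)) /
              ((4 * (m+1) + 2 * k + 2).choose (2 * k) : ℝ)) *
            (3 - 2 * Real.sqrt 2) ^ k
          = (4*(m:ℝ)+3)*(4*(m:ℝ)+5)/16 *
              ((poch (3 / 4) m * poch (5 / 4) m) / (poch (7 / 8) m * poch (9 / 8) m)) /
              ((8*(m:ℝ)+7)*(8*(m:ℝ)+9)/64) := by
        rw [eq_div_iff hA]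
        linarith [hrec]
      rw [goal2, hp1, hp2, hp3, hp4]
      push_cast
      field_simp
      ring
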